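/- arXiv:1207.2507 — 4 statements merged into one kernel-verified Lean document; each statement's English description precedes it below -/
import Mathlib

section
/- Let J ⊆ {1,…,n}, let F_J = {c ∈ ℝ^n_{≥0} : c_i = 0 for i ∈ J} and let ri(F_J) = {c ∈ F_J : c_j > 0 for j ∉ J}. Let w_r(c) = k_r ∏_i a_i(c)^{α_{ri}} with k_r > 0, α_{ri} ≥ 0, a_i(c) = c_i g_i(c), g_i(c) > 0. If for some point c* ∈ ri(F_J) and some index i ∈ J one has ∑_r γ_{ri} w_r(c*) = 0, then ∑_r γ_{ri} w_r(c) = 0 for all c ∈ F_J. -/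
set_option autoImplicit false

open Finset in
/-- If ∑_r γ_{ri} w_r vanishes at one point of the relative interior of a face
F_J (for an index i ∈ J), then it vanishes on the whole face F_J. -/
theorem sum_rate_zero_on_face (n m : ℕ) (α β : Fin m → (Fin n → ℝ))
    (hα : ∀ r i, 0 ≤ α r i) (hβ : ∀ r i, 0 ≤ β r i)
    (k : Fin m → ℝ) (hk : ∀ r, 0 < k r)
    (g : (Fin n → ℝ) → (Fin n → ℝ)) (hg : ∀ c i, 0 < g c i)
    (w : Fin m → (Fin n → ℝ) → ℝ)
    (hw : ∀ r c, w r c = k r * ∏ j, (c j * g c j) ^ (α r j))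
    (J : Finset (Fin n)) (i : Fin n) (hi : i ∈ J)
    (cstar : Fin n → ℝ) (hcstar₀ : ∀ j ∈ J, cstar j = 0)
    (hcstar₁ : ∀ j ∉ J, 0 < cstar j)
    (hzero : ∑ r, (β r i - α r i) * w r cstar = 0) :
    ∀ c : Fin n → ℝ, (∀ j, 0 ≤ c j) → (∀ j ∈ J, c j = 0) →
      ∑ r, (β r i - α r i) * w r c = 0 := by
  -- nonnegativity of cstar
  have hcstar_nn : ∀ j, 0 ≤ cstar j := by
    intro j
    by_cases hj : j ∈ J
    · exact le_of_eq (hcstar₀ j hj).symm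
    · exact (hcstar₁ j hj).le
  -- each w r cstar is nonnegative
  have hwnn : ∀ r, 0 ≤ w r cstar := by
    intro r
    rw [hw]
    refine mul_nonneg (hk r).le (Finset.prod_nonneg fun j _ => ?_)
    exact Real.rpow_nonneg (mul_nonneg (hcstar_nn j) (hg cstar j).le) _
  -- each term of the sum at cstar is nonnegative
  have hterm_nn : ∀ r ∈ Finset.univ, 0 ≤ (β r i - α r i) * w r cstar := by
    intro r _
    rcases eq_or_lt_of_le (hwnn r) with h | h
    · rw [← h, mul_zero]
    · -- w r cstar > 0 forces α r i = 0
      have hprod : ∏ j, (cstar j * g cstar j) ^ (α r j) ≠ 0 := by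
        intro h0
        rw [hw, h0, mul_zero] at h
        exact lt_irrefl 0 h
      have hfac : (cstar i * g cstar i) ^ (α r i) ≠ 0 := by
        intro h0
        exact hprod (Finset.prod_eq_zero (Finset.mem_univ i) h0)
      have hci : cstar i * g cstar i = 0 := by
        rw [hcstar₀ i hi, zero_mul]
      have hαi : α r i = 0 := by
        by_contra hne
        exact hfac (by rw [hci, Real.zero_rpow hne])
      rw [hαi, sub_zero]
      exact mul_nonneg (hβ r i) h.le
  -- each term at cstar is zero
  have hterm_zero : ∀ r, (β r i - α r i) * w r cstar = 0 := by
    intro r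
    exact (Finset.sum_eq_zero_iff_of_nonneg hterm_nn).mp hzero r (Finset.mem_univ r)
  intro c hc hcJ
  refine Finset.sum_eq_zero fun r _ => ?_
  by_cases hγ : β r i - α r i = 0
  · rw [hγ, zero_mul]
  · -- then w r cstar = 0
    have hwz : w r cstar = 0 := by
      rcases mul_eq_zero.mp (hterm_zero r) with h | h
      · exact absurd h hγ
      · exact h
    -- so the product at cstar is zero
    have hprodz : ∏ j, (cstar j * g cstar j) ^ (α r j) = 0 := by
      rw [hw] at hwz
      rcases mul_eq_zero.mp hwz with h | h
      · exact absurd h (hk r).ne'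
      · exact h
    obtain ⟨j, -, hjz⟩ := Finset.prod_eq_zero_iff.mp hprodz
    have hxj : cstar j * g cstar j = 0 ∧ α r j ≠ 0 := by
      constructor
      · by_contra hne
        exact hne (by
          rcases (Real.rpow_eq_zero_iff_of_nonneg
            (mul_nonneg (hcstar_nn j) (hg cstar j).le)).mp hjz with ⟨h1, _⟩
          exact h1)
      · rcases (Real.rpow_eq_zero_iff_of_nonneg
          (mul_nonneg (hcstar_nn j) (hg cstar j).le)).mp hjz with ⟨_, h2⟩
        exact h2
    have hcsj : cstar j = 0 := by
      rcases mul_eq_zero.mp hxj.1 with h | h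
      · exact h
      · exact absurd h (hg cstar j).ne'
    have hjJ : j ∈ J := by
      by_contra hjn
      exact (hcstar₁ j hjn).ne' hcsj
    have hcj : c j = 0 := hcJ j hjJ
    have : (c j * g c j) ^ (α r j) = 0 := by
      rw [hcj, zero_mul, Real.zero_rpow hxj.2]
    rw [hw, Finset.prod_eq_zero (Finset.mem_univ j) this, mul_zero, mul_zero]
end

section
/- With the setting of the generalized mass action law (w_r(c) = k_r ∏ a_i^{α_{ri}}, a_i = c_i g_i(c), g_i > 0, k_r > 0), the following are equivalent for a face F_J and a set S of elementary reactions: (1) ∑_{r∈S} γ_{ri} w_r(c) = 0 for some point c ∈ ri(F_J) and all i ∈ J; (2) ∑_{r∈S} γ_{ri} w_r(c) = 0 for all c ∈ F_J and all i ∈ J; (3) each single reaction r ∈ S satisfies γ_{ri} w_r(c) = 0 on F_J for all i ∈ J; (4) for every r ∈ S, either γ_{rj} = 0 for all j ∈ J, or α_{rj} > 0 for some j ∈ J. -/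
set_option autoImplicit false

open Finset in
/-- Equivalent characterizations of invariance of a face F_J with respect to a
set S of elementary reactions obeying the generalized mass action law. -/
theorem face_invariance_tfae (n m : ℕ) (α β : Fin m → (Fin n → ℝ))
    (hα : ∀ r i, 0 ≤ α r i) (hβ : ∀ r i, 0 ≤ β r i)
    (k : Fin m → ℝ) (hk : ∀ r, 0 < k r)
    (g : (Fin n → ℝ) → (Fin n → ℝ)) (hg : ∀ c i, 0 < g c i)
    (w : Fin m → (Fin n → ℝ) → ℝ)
    (hw : ∀ r c, w r c = k r * ∏ j, (c j * g c j) ^ (α r j))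
    (J : Finset (Fin n)) (S : Finset (Fin m)) :
    ((∃ c : Fin n → ℝ, (∀ j ∈ J, c j = 0) ∧ (∀ j ∉ J, 0 < c j) ∧
        ∀ i ∈ J, ∑ r ∈ S, (β r i - α r i) * w r c = 0) ↔
      (∀ c : Fin n → ℝ, (∀ j, 0 ≤ c j) → (∀ j ∈ J, c j = 0) →
        ∀ i ∈ J, ∑ r ∈ S, (β r i - α r i) * w r c = 0)) ∧
    ((∀ c : Fin n → ℝ, (∀ j, 0 ≤ c j) → (∀ j ∈ J, c j = 0) →
        ∀ i ∈ J, ∑ r ∈ S, (β r i - α r i) * w r c = 0) ↔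
      (∀ r ∈ S, ∀ c : Fin n → ℝ, (∀ j, 0 ≤ c j) → (∀ j ∈ J, c j = 0) →
        ∀ i ∈ J, (β r i - α r i) * w r c = 0)) ∧
    ((∀ r ∈ S, ∀ c : Fin n → ℝ, (∀ j, 0 ≤ c j) → (∀ j ∈ J, c j = 0) →
        ∀ i ∈ J, (β r i - α r i) * w r c = 0) ↔
      (∀ r ∈ S, (∀ j ∈ J, β r j - α r j = 0) ∨ (∃ j ∈ J, 0 < α r j))) := by
  -- w vanishes if some coordinate with positive stoichiometric exponent is zero
  have hw0 : ∀ (r : Fin m) (c : Fin n → ℝ) (j : Fin n), c j = 0 → 0 < α r j →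
      w r c = 0 := by
    intro r c j hcj haj
    rw [hw, Finset.prod_eq_zero (Finset.mem_univ j)
      (by rw [hcj, zero_mul, Real.zero_rpow (ne_of_gt haj)]), mul_zero]
  -- w is nonnegative on the nonnegative orthant
  have hwnn : ∀ (r : Fin m) (c : Fin n → ℝ), (∀ j, 0 ≤ c j) → 0 ≤ w r c := by
    intro r c hc
    rw [hw]
    exact mul_nonneg (hk r).le (Finset.prod_nonneg fun j _ =>
      Real.rpow_nonneg (mul_nonneg (hc j) (hg c j).le) _)
  -- w is positive when every coordinate is positive or has zero exponent
  have hwpos : ∀ (r : Fin m) (c : Fin n → ℝ), (∀ j, 0 < c j ∨ α r j = 0) →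
      0 < w r c := by
    intro r c h
    rw [hw]
    refine mul_pos (hk r) (Finset.prod_pos fun j _ => ?_)
    rcases h j with h0 | h0
    · exact Real.rpow_pos_of_pos (mul_pos h0 (hg c j)) _
    · rw [h0, Real.rpow_zero]; exact one_pos
  have h43 : (∀ r ∈ S, (∀ j ∈ J, β r j - α r j = 0) ∨ (∃ j ∈ J, 0 < α r j)) →
      (∀ r ∈ S, ∀ c : Fin n → ℝ, (∀ j, 0 ≤ c j) → (∀ j ∈ J, c j = 0) →
        ∀ i ∈ J, (β r i - α r i) * w r c = 0) := by
    intro h4 r hr c _ hcJ i hi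
    rcases h4 r hr with h | ⟨j, hj, hjpos⟩
    · rw [h i hi, zero_mul]
    · rw [hw0 r c j (hcJ j hj) hjpos, mul_zero]
  have h32 : (∀ r ∈ S, ∀ c : Fin n → ℝ, (∀ j, 0 ≤ c j) → (∀ j ∈ J, c j = 0) →
        ∀ i ∈ J, (β r i - α r i) * w r c = 0) →
      (∀ c : Fin n → ℝ, (∀ j, 0 ≤ c j) → (∀ j ∈ J, c j = 0) →
        ∀ i ∈ J, ∑ r ∈ S, (β r i - α r i) * w r c = 0) := by
    intro h3 c hc hcJ i hi
    exact Finset.sum_eq_zero fun r hr => h3 r hr c hc hcJ i hi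
  have h21 : (∀ c : Fin n → ℝ, (∀ j, 0 ≤ c j) → (∀ j ∈ J, c j = 0) →
        ∀ i ∈ J, ∑ r ∈ S, (β r i - α r i) * w r c = 0) →
      (∃ c : Fin n → ℝ, (∀ j ∈ J, c j = 0) ∧ (∀ j ∉ J, 0 < c j) ∧
        ∀ i ∈ J, ∑ r ∈ S, (β r i - α r i) * w r c = 0) := by
    intro h2
    refine ⟨fun j => if j ∈ J then 0 else 1, ?_, ?_, ?_⟩
    · intro j hj; simp [hj]
    · intro j hj; simp [hj]
    · refine h2 _ (fun j => ?_) (fun j hj => by simp [hj])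
      by_cases hj : j ∈ J <;> simp [hj]
  have h14 : (∃ c : Fin n → ℝ, (∀ j ∈ J, c j = 0) ∧ (∀ j ∉ J, 0 < c j) ∧
        ∀ i ∈ J, ∑ r ∈ S, (β r i - α r i) * w r c = 0) →
      (∀ r ∈ S, (∀ j ∈ J, β r j - α r j = 0) ∨ (∃ j ∈ J, 0 < α r j)) := by
    rintro ⟨c, hcJ, hcJc, hsum⟩ r hr
    by_cases h : ∃ j ∈ J, 0 < α r j
    · right; exact h
    · left
      push_neg at h
      have hα0 : ∀ j ∈ J, α r j = 0 := fun j hj => le_antisymm (h j hj) (hα r j)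
      have hc0 : ∀ j, 0 ≤ c j := by
        intro j
        by_cases hj : j ∈ J
        · rw [hcJ j hj]
        · exact (hcJc j hj).le
      have hwr : 0 < w r c := by
        refine hwpos r c fun j => ?_
        by_cases hj : j ∈ J
        · exact Or.inr (hα0 j hj)
        · exact Or.inl (hcJc j hj)
      intro i hi
      have hterm : ∀ r' ∈ S, 0 ≤ (β r' i - α r' i) * w r' c := by
        intro r' _
        by_cases h' : ∃ j ∈ J, 0 < α r' j
        · obtain ⟨j, hj, hjp⟩ := h'
          rw [hw0 r' c j (hcJ j hj) hjp, mul_zero]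
        · push_neg at h'
          have : α r' i = 0 := le_antisymm (h' i hi) (hα r' i)
          rw [this, sub_zero]
          exact mul_nonneg (hβ r' i) (hwnn r' c hc0)
      have hzero := (Finset.sum_eq_zero_iff_of_nonneg hterm).mp (hsum i hi) r hr
      rw [hα0 i hi, sub_zero] at hzero ⊢
      rcases mul_eq_zero.mp hzero with h0 | h0
      · exact h0
      · exact absurd h0 (ne_of_gt hwr)
  exact ⟨⟨fun h1 => h32 (h43 (h14 h1)), h21⟩,
         ⟨fun h2 => h43 (h14 (h21 h2)), h32⟩,
         ⟨fun h3 => h14 (h21 (h32 h3)), h43⟩⟩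
end

section
/- Let N : [0,∞) → ℝ^n_{≥0} be a solution of an autonomous ODE dN/dt = f(N) with f continuously differentiable, and let x* be an ω-limit point of N (i.e. N(t_j) → x* for some t_j → ∞). Then the solution x(τ) of the ODE with x(0) = x* satisfies x(τ) ∈ ℝ^n_{≥0} for all τ ∈ ℝ (positive and negative), and consequently if x*_i = 0 then f_i(x*) = 0. -/
set_option autoImplicit false

open Filter Set Metric Real in
/-- Continuous dependence on initial conditions, forward in time, for a C¹
autonomous vector field, via Grönwall's inequality and a bootstrap argument. -/
private lemma forward_dep {n : ℕ} (f : (Fin n → ℝ) → (Fin n → ℝ)) (hf : ContDiff ℝ 1 f)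
    (x : ℝ → (Fin n → ℝ)) {b : ℝ} (hb : 0 ≤ b)
    (hx : ∀ t ∈ Set.Icc 0 b, HasDerivAt x (f (x t)) t)
    {ε : ℝ} (hε : 0 < ε) :
    ∃ δ > 0, ∀ g : ℝ → (Fin n → ℝ), (∀ t ∈ Set.Icc 0 b, HasDerivAt g (f (g t)) t) →
      dist (g 0) (x 0) ≤ δ → dist (g b) (x b) ≤ ε := by
  have hxc : ContinuousOn x (Icc 0 b) := fun t ht => (hx t ht).continuousAt.continuousWithinAt
  obtain ⟨ρ0, hρ0⟩ := isCompact_Icc.exists_bound_of_continuousOn hxc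
  set ρ : ℝ := max ρ0 0 with hρdef
  have hρ : ∀ t ∈ Icc 0 b, ‖x t‖ ≤ ρ := fun t ht => (hρ0 t ht).trans (le_max_left _ _)
  set B : Set (Fin n → ℝ) := closedBall 0 (ρ + 1) with hBdef
  have hBc : IsCompact B := isCompact_closedBall 0 (ρ + 1)
  obtain ⟨K0, hK0⟩ := hBc.exists_bound_of_continuousOn
    ((hf.continuous_fderiv one_ne_zero).continuousOn (s := B))
  set K : NNReal := ⟨max K0 0, le_max_right _ _⟩ with hKdef
  have hlip : LipschitzOnWith K f B := by
    apply (convex_closedBall _ _).lipschitzOnWith_of_nnnorm_fderiv_le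
      (fun y _ => (hf.differentiable one_ne_zero).differentiableAt)
    intro y hy
    have := hK0 y hy
    simp only [← NNReal.coe_le_coe, coe_nnnorm, hKdef]
    exact this.trans (le_max_left _ _)
  have hsub : ∀ t ∈ Icc 0 b, closedBall (x t) 1 ⊆ B := by
    intro t ht y hy
    simp only [hBdef, mem_closedBall, dist_zero_right] at *
    calc ‖y‖ = ‖(y - x t) + x t‖ := by rw [sub_add_cancel]
      _ ≤ ‖y - x t‖ + ‖x t‖ := norm_add_le _ _
      _ ≤ 1 + ρ := by
          rw [← dist_eq_norm] at *
          exact add_le_add hy (by simpa [dist_zero_right] using hρ t ht)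
      _ = ρ + 1 := by ring
  set E : ℝ := exp (K * b) with hEdef
  have hE1 : 1 ≤ E := one_le_exp (by positivity)
  set δ : ℝ := min ε 1 / (2 * E) with hδdef
  have hδpos : 0 < δ := by
    apply div_pos (lt_min hε one_pos); linarith
  have hδhalf : δ ≤ 1 / 2 := by
    apply div_le_div₀ zero_le_one (min_le_right ε 1) two_pos; linarith
  refine ⟨δ, hδpos, ?_⟩
  intro g hg hg0
  -- the Grönwall estimate, valid as long as `g` stays within distance 1 of `x`
  have grw : ∀ T ∈ Icc 0 b, (∀ u ∈ Icc 0 T, dist (g u) (x u) ≤ 1) →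
      ∀ t ∈ Icc 0 T, dist (g t) (x t) ≤ δ * exp (K * t) := by
    intro T hT hclose t ht
    have hsubI : Icc (0:ℝ) T ⊆ Icc 0 b := Icc_subset_Icc le_rfl hT.2
    have key := dist_le_of_trajectories_ODE_of_mem
      (v := fun _ y => f y) (s := fun u => B ∩ closedBall (x u) 1) (K := K)
      (f := g) (g := x) (a := 0) (b := T) (δ := δ)
      (fun u _ => hlip.mono inter_subset_left)
      (fun u hu => (hg u (hsubI hu)).continuousAt.continuousWithinAt)
      (fun u hu => (hg u (hsubI (Ico_subset_Icc_self hu))).hasDerivWithinAt)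
      (fun u hu => ⟨hsub u (hsubI (Ico_subset_Icc_self hu))
          (mem_closedBall.mpr (hclose u (Ico_subset_Icc_self hu))),
        mem_closedBall.mpr (hclose u (Ico_subset_Icc_self hu))⟩)
      (fun u hu => (hx u (hsubI hu)).continuousAt.continuousWithinAt)
      (fun u hu => (hx u (hsubI (Ico_subset_Icc_self hu))).hasDerivWithinAt)
      (fun u hu => ⟨by
          simp only [hBdef, mem_closedBall, dist_zero_right]
          exact (hρ u (hsubI (Ico_subset_Icc_self hu))).trans (by linarith),
        mem_closedBall_self zero_le_one⟩)
      hg0 t ht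
    simpa using key
  have hexp_le : ∀ t ∈ Icc 0 b, δ * exp (K * t) ≤ min ε 1 / 2 := by
    intro t ht
    have h1 : exp ((K:ℝ) * t) ≤ E := by
      rw [hEdef]; apply exp_le_exp.mpr; exact mul_le_mul_of_nonneg_left ht.2 K.2
    have h2 : δ * exp ((K:ℝ) * t) ≤ δ * E := by
      apply mul_le_mul_of_nonneg_left h1 hδpos.le
    have h3 : δ * E = min ε 1 / 2 := by
      rw [hδdef]; field_simp
    linarith
  -- bootstrap: the set of times up to which `g` stays within distance 1 of `x`
  set S : Set ℝ := {T | T ∈ Icc 0 b ∧ ∀ u ∈ Icc 0 T, dist (g u) (x u) ≤ 1} with hSdef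
  have h0S : (0:ℝ) ∈ S := by
    refine ⟨⟨le_rfl, hb⟩, ?_⟩
    intro u hu
    have : u = 0 := le_antisymm hu.2 hu.1
    subst this; linarith
  have hS_bdd : BddAbove S := ⟨b, fun t ht => ht.1.2⟩
  have hS_ne : S.Nonempty := ⟨0, h0S⟩
  set T : ℝ := sSup S with hTdef
  have hT_Icc : T ∈ Icc 0 b := ⟨le_csSup hS_bdd h0S, csSup_le hS_ne fun t ht => ht.1.2⟩
  have hcont : ∀ t ∈ Icc 0 b, ContinuousAt (fun u => dist (g u) (x u)) t := fun t ht =>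
    ((hg t ht).continuousAt.dist (hx t ht).continuousAt)
  have hlt : ∀ u ∈ Ico 0 T, dist (g u) (x u) ≤ 1 := by
    intro u hu
    obtain ⟨t, htS, hut⟩ := exists_lt_of_lt_csSup hS_ne hu.2
    exact htS.2 u ⟨hu.1, hut.le⟩
  have hatT : dist (g T) (x T) ≤ 1 := by
    rcases eq_or_lt_of_le hT_Icc.1 with h0 | h0
    · rw [← h0]; exact hg0.trans (by linarith)
    · have hne : (nhdsWithin T (Ico 0 T)).NeBot := by
        rw [← mem_closure_iff_nhdsWithin_neBot, closure_Ico (ne_of_lt h0)]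
        exact ⟨h0.le, le_rfl⟩
      have htd : Filter.Tendsto (fun t => dist (g t) (x t)) (nhdsWithin T (Ico 0 T))
          (nhds (dist (g T) (x T))) :=
        (hcont T hT_Icc).continuousWithinAt
      refine le_of_tendsto htd ?_
      filter_upwards [self_mem_nhdsWithin] with t ht
      exact hlt t ht
  have hTS : T ∈ S := by
    refine ⟨hT_Icc, ?_⟩
    intro u hu
    rcases lt_or_eq_of_le hu.2 with h | h
    · exact hlt u ⟨hu.1, h⟩
    · rw [h]; exact hatT
  have hTb : T = b := by
    by_contra hne
    have hTlt : T < b := lt_of_le_of_ne hT_Icc.2 hne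
    have hT1 : dist (g T) (x T) < 1 := by
      have h1 := grw T hT_Icc hTS.2 T ⟨hT_Icc.1, le_rfl⟩
      have h2 := hexp_le T hT_Icc
      have h3 : min ε 1 / 2 ≤ 1 / 2 := by
        have := min_le_right ε 1; linarith
      linarith
    obtain ⟨η, hη, hball⟩ := Metric.eventually_nhds_iff.mp
      (Filter.Tendsto.eventually_lt_const hT1 (hcont T hT_Icc))
    set T' : ℝ := min (T + η / 2) b with hT'def
    have hTT' : T < T' := lt_min (by linarith) hTlt
    have hT'S : T' ∈ S := by
      refine ⟨⟨hT_Icc.1.trans hTT'.le, min_le_right _ _⟩, ?_⟩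
      intro u hu
      rcases le_or_gt u T with h | h
      · exact hTS.2 u ⟨hu.1, h⟩
      · have hd : dist u T < η := by
          rw [Real.dist_eq, abs_of_pos (by linarith)]
          have : u ≤ T + η / 2 := hu.2.trans (min_le_left _ _)
          linarith
        exact (hball hd).le
    exact absurd (le_csSup hS_bdd hT'S) (not_le.mpr hTT')
  have hall : ∀ u ∈ Icc 0 b, dist (g u) (x u) ≤ 1 := by
    rw [← hTb]; exact hTS.2
  have hfinal := grw b ⟨hb, le_rfl⟩ hall b ⟨hb, le_rfl⟩
  have h2 := hexp_le b ⟨hb, le_rfl⟩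
  have h3 : min ε 1 / 2 ≤ ε := by
    have := min_le_left ε 1; linarith
  linarith

open Filter Set Metric Real in
/-- Any point on a trajectory through an ω-limit point of `N` is a limit of values of `N`
at nonnegative times, hence has nonnegative coordinates. -/
private lemma key {n : ℕ} {f : (Fin n → ℝ) → (Fin n → ℝ)} (hf : ContDiff ℝ 1 f)
    {N : ℝ → (Fin n → ℝ)}
    (hN : ∀ t, 0 ≤ t → HasDerivAt N (f (N t)) t)
    (hNpos : ∀ t, 0 ≤ t → ∀ i, 0 ≤ N t i)
    {xstar : Fin n → ℝ} {tj : ℕ → ℝ}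
    (htj : Tendsto tj atTop atTop)
    (hlim : Tendsto (fun j => N (tj j)) atTop (nhds xstar))
    (x : ℝ → (Fin n → ℝ)) (hx0 : x 0 = xstar) (s : ℝ)
    (hx : ∀ t ∈ Set.uIcc 0 s, HasDerivAt x (f (x t)) t) :
    ∀ i, 0 ≤ x s i := by
  intro i
  refine le_of_forall_pos_le_add ?_
  intro ε hε
  rcases le_or_gt 0 s with hs | hs
  · -- forward in time
    have hxI : ∀ t ∈ Icc 0 s, HasDerivAt x (f (x t)) t := by
      intro t ht; exact hx t (by rwa [Set.uIcc_of_le hs])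
    obtain ⟨δ, hδ, hdep⟩ := forward_dep f hf x hs hxI hε
    have h1 := htj.eventually_ge_atTop (0:ℝ)
    have h2 : ∀ᶠ j in atTop, dist (N (tj j)) xstar ≤ δ := by
      filter_upwards [Metric.tendsto_nhds.mp hlim δ hδ] with j hj using hj.le
    obtain ⟨j, hj0, hjd⟩ := (h1.and h2).exists
    set g : ℝ → (Fin n → ℝ) := fun t => N (tj j + t) with hgdef
    have hg : ∀ t ∈ Icc 0 s, HasDerivAt g (f (g t)) t := by
      intro t ht
      have hpos : (0:ℝ) ≤ tj j + t := by linarith [ht.1]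
      have h' : HasDerivAt (fun u : ℝ => tj j + u) 1 t := by
        simpa using (hasDerivAt_id t).const_add (tj j)
      simpa [hgdef, Function.comp_def] using HasDerivAt.scomp t (hN (tj j + t) hpos) h'
    have hg0 : dist (g 0) (x 0) ≤ δ := by
      simpa [hgdef, hx0] using hjd
    have hd := hdep g hg hg0
    have hpi : |g s i - x s i| ≤ ε := by
      have h4 : |(g s - x s) i| ≤ ‖g s - x s‖ := norm_le_pi_norm (g s - x s) i
      rw [dist_eq_norm] at hd
      simp only [Pi.sub_apply] at h4
      linarith
    have hgpos : 0 ≤ g s i := hNpos (tj j + s) (by linarith) i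
    have := abs_le.mp hpi
    linarith [this.1, this.2]
  · -- backward in time
    set b : ℝ := -s with hbdef
    have hbpos : 0 < b := by rw [hbdef]; linarith
    set y : ℝ → (Fin n → ℝ) := fun u => x (-u) with hydef
    have hy : ∀ u ∈ Icc 0 b, HasDerivAt y ((fun z => -f z) (y u)) u := by
      intro u hu
      have hmem : -u ∈ Set.uIcc 0 s := by
        rw [Set.uIcc_of_ge hs.le, Set.mem_Icc]
        exact ⟨by linarith [hu.2], by linarith [hu.1]⟩
      have h' : HasDerivAt (fun u : ℝ => -u) (-1) u := hasDerivAt_neg u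
      have := HasDerivAt.scomp u (hx (-u) hmem) h'
      simpa [hydef, neg_smul, one_smul, Function.comp_def] using this
    obtain ⟨δ, hδ, hdep⟩ := forward_dep (fun z => -f z) hf.neg y hbpos.le hy hε
    have h1 := htj.eventually_ge_atTop b
    have h2 : ∀ᶠ j in atTop, dist (N (tj j)) xstar ≤ δ := by
      filter_upwards [Metric.tendsto_nhds.mp hlim δ hδ] with j hj using hj.le
    obtain ⟨j, hjb, hjd⟩ := (h1.and h2).exists
    set g : ℝ → (Fin n → ℝ) := fun u => N (tj j - u) with hgdef
    have hg : ∀ u ∈ Icc 0 b, HasDerivAt g ((fun z => -f z) (g u)) u := by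
      intro u hu
      have hpos : (0:ℝ) ≤ tj j - u := by linarith [hu.2]
      have h' : HasDerivAt (fun u : ℝ => tj j - u) (-1) u := by
        simpa using (hasDerivAt_id u).const_sub (tj j)
      have := HasDerivAt.scomp u (hN (tj j - u) hpos) h'
      simpa [hgdef, neg_smul, one_smul, Function.comp_def] using this
    have hg0 : dist (g 0) (y 0) ≤ δ := by
      simpa [hgdef, hydef, hx0] using hjd
    have hd := hdep g hg hg0
    have hyb : y b = x s := by simp [hydef, hbdef]
    have hgb : g b = N (tj j + s) := by simp [hgdef, hbdef, sub_neg_eq_add]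
    rw [hyb, hgb] at hd
    have hpi : |N (tj j + s) i - x s i| ≤ ε := by
      have h4 : |(N (tj j + s) - x s) i| ≤ ‖N (tj j + s) - x s‖ :=
        norm_le_pi_norm (N (tj j + s) - x s) i
      rw [dist_eq_norm] at hd
      simp only [Pi.sub_apply] at h4
      linarith
    have hgpos : 0 ≤ N (tj j + s) i := hNpos (tj j + s) (by linarith) i
    have := abs_le.mp hpi
    linarith [this.1, this.2]

open Filter in
/-- An ω-limit point x* of a solution staying in the positive orthant generates
a whole trajectory in the orthant (for positive and negative times), and the
vector field vanishes in every coordinate where x* vanishes. -/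
theorem omega_limit_trajectory_nonneg (n : ℕ)
    (f : (Fin n → ℝ) → (Fin n → ℝ)) (hf : ContDiff ℝ 1 f)
    (N : ℝ → (Fin n → ℝ))
    (hN : ∀ t, 0 ≤ t → HasDerivAt N (f (N t)) t)
    (hNpos : ∀ t, 0 ≤ t → ∀ i, 0 ≤ N t i)
    (xstar : Fin n → ℝ) (tj : ℕ → ℝ)
    (htj : Tendsto tj atTop atTop)
    (hlim : Tendsto (fun j => N (tj j)) atTop (nhds xstar)) :
    (∀ x : ℝ → (Fin n → ℝ), x 0 = xstar →
        (∀ τ : ℝ, HasDerivAt x (f (x τ)) τ) → ∀ τ i, 0 ≤ x τ i) ∧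
      ∀ i, xstar i = 0 → f xstar i = 0 := by
  constructor
  · intro x hx0 hxd τ i
    exact key hf hN hNpos htj hlim x hx0 τ (fun t _ => hxd t) i
  · intro i hi
    obtain ⟨x, hx0, ε₀, hε₀, hxd⟩ := ContDiffAt.exists_forall_mem_closedBall_exists_eq_forall_mem_Ioo_hasDerivAt₀ (x₀ := xstar) hf.contDiffAt (0:ℝ)
    have hpos : ∀ s ∈ Set.Ioo (-(ε₀/2)) (ε₀/2), ∀ i', 0 ≤ x s i' := by
      intro s hs i'
      refine key hf hN hNpos htj hlim x hx0 s ?_ i'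
      intro t ht
      apply hxd
      have hs1 := hs.1
      have hs2 := hs.2
      rw [Set.mem_Ioo]
      rcases Set.mem_uIcc.mp ht with ⟨h1, h2⟩ | ⟨h1, h2⟩ <;>
        exact ⟨by linarith, by linarith⟩
    have hmin : IsLocalMin (fun t => x t i) 0 := by
      filter_upwards [Ioo_mem_nhds (by linarith : -(ε₀/2) < 0) (by linarith : 0 < ε₀/2)]
        with t ht
      have h1 : x 0 i = 0 := by rw [hx0]; exact hi
      rw [h1]
      exact hpos t ht i
    have hd : HasDerivAt (fun t => x t i) (f xstar i) 0 := by
      have h1 : HasDerivAt x (f xstar) 0 := by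
        have := hxd 0 ⟨by linarith, by linarith⟩
        rwa [hx0] at this
      exact (ContinuousLinearMap.proj i :
        (Fin n → ℝ) →L[ℝ] ℝ).hasFDerivAt.comp_hasDerivAt 0 h1
    exact hmin.hasDerivAt_eq_zero hd
end

section
/- Let δ ∈ ℝ^n and suppose along a solution N(t) ∈ ℝ^n_{≥0} of the kinetic equations, (d/dt)(δ, N(t)) = V ∑_{r∈J₁} w_r(t)(γ_r, δ) with V > 0, (γ_r, δ) < 0 and w_r(t) ≥ 0 continuous for r ∈ J₁. If N(t) is bounded, then liminf_{t→∞} w_r(t) = 0 for each r ∈ J₁; in particular, if each w_r(t) converges as t → ∞ then w_r(t) → 0. -/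
set_option autoImplicit false

open Filter Finset in
/-- If the solution is bounded, the rates of the irreversible reactions tend to
zero (in the liminf sense; in particular any converging rate tends to 0). -/
theorem irreversible_rates_tend_to_zero (n ℓ : ℕ)
    (γ : Fin ℓ → (Fin n → ℝ)) (δ : Fin n → ℝ) (J₁ : Finset (Fin ℓ))
    (V : ℝ) (hV : 0 < V)
    (N : ℝ → (Fin n → ℝ)) (w : Fin ℓ → ℝ → ℝ)
    (hNpos : ∀ t, 0 ≤ t → ∀ i, 0 ≤ N t i)
    (hNbdd : ∃ C : ℝ, ∀ t, 0 ≤ t → ∀ i, N t i ≤ C)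
    (hirr : ∀ r ∈ J₁, ∑ i, γ r i * δ i < 0)
    (hw : ∀ r ∈ J₁, ∀ t, 0 ≤ t → 0 ≤ w r t)
    (hwcont : ∀ r ∈ J₁, Continuous (w r))
    (hG : ∀ t, 0 ≤ t → HasDerivAt (fun s => ∑ i, δ i * N s i)
        (V * ∑ r ∈ J₁, w r t * ∑ i, γ r i * δ i) t) :
    (∀ r ∈ J₁, Filter.liminf (fun t => w r t) Filter.atTop = 0) ∧
      ∀ r ∈ J₁, ∀ L : ℝ, Tendsto (w r) atTop (nhds L) →
        Tendsto (w r) atTop (nhds 0) := by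
  obtain ⟨C, hC⟩ := hNbdd
  set G : ℝ → ℝ := fun s => ∑ i, δ i * N s i with hGdef
  set D : ℝ := ∑ i, |δ i| * C with hDdef
  have hGlb : ∀ t, 0 ≤ t → -D ≤ G t := by
    intro t ht
    have habs : |G t| ≤ D := by
      calc |G t| ≤ ∑ i, |δ i * N t i| := Finset.abs_sum_le_sum_abs _ _
        _ ≤ D := Finset.sum_le_sum fun i _ => by
            rw [abs_mul]
            exact mul_le_mul_of_nonneg_left
              (by rw [abs_of_nonneg (hNpos t ht i)]; exact hC t ht i) (abs_nonneg _)
    linarith [neg_abs_le (G t)]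
  -- core lemma: no rate stays bounded away from 0
  have key : ∀ r ∈ J₁, ∀ ε : ℝ, 0 < ε → ¬ (∀ᶠ t in atTop, ε ≤ w r t) := by
    intro r hr ε hε h
    obtain ⟨T0, hT0⟩ := eventually_atTop.mp h
    set T : ℝ := max T0 0 with hTdef
    have hT0le : (0:ℝ) ≤ T := le_max_right _ _
    set c : ℝ := ∑ i, γ r i * δ i with hcdef
    have hc : c < 0 := hirr r hr
    have hVεc : V * ε * c < 0 := by
      have := mul_pos hV hε; nlinarith
    -- the auxiliary decreasing function
    set H : ℝ → ℝ := fun s => G s - V * ε * c * s with hHdef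
    have hHderiv : ∀ t, 0 ≤ t → HasDerivAt H
        (V * (∑ r' ∈ J₁, w r' t * ∑ i, γ r' i * δ i) - V * ε * c) t := by
      intro t ht
      exact (hG t ht).sub (by simpa using (hasDerivAt_id t).const_mul (V * ε * c))
    have hanti : AntitoneOn H (Set.Ici T) := by
      apply antitoneOn_of_deriv_nonpos (convex_Ici T)
      · intro t ht
        exact (hHderiv t (hT0le.trans ht)).continuousAt.continuousWithinAt
      · intro t ht
        rw [interior_Ici] at ht
        exact ((hHderiv t (hT0le.trans ht.le)).differentiableAt).differentiableWithinAt
      · intro t ht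
        rw [interior_Ici] at ht
        have ht0 : (0:ℝ) ≤ t := hT0le.trans ht.le
        rw [(hHderiv t ht0).deriv]
        have hsum : ∑ r' ∈ J₁, w r' t * ∑ i, γ r' i * δ i ≤ ε * c := by
          have h1 : ∑ r' ∈ J₁, w r' t * ∑ i, γ r' i * δ i ≤ w r t * c := by
            rw [← Finset.add_sum_erase _ _ hr]
            have : ∑ r' ∈ J₁.erase r, w r' t * ∑ i, γ r' i * δ i ≤ 0 :=
              Finset.sum_nonpos fun r' hr' =>
                mul_nonpos_of_nonneg_of_nonpos
                  (hw r' (Finset.mem_of_mem_erase hr') t ht0)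
                  (hirr r' (Finset.mem_of_mem_erase hr')).le
            linarith
          have h2 : w r t * c ≤ ε * c :=
            mul_le_mul_of_nonpos_right (hT0 t ((le_max_left _ _).trans ht.le)) hc.le
          linarith
        nlinarith [mul_le_mul_of_nonneg_left hsum hV.le]
    -- go far enough to contradict the lower bound
    set t : ℝ := T + (G T + D + 1) / (-(V * ε * c)) with htdef
    have hGT : -D ≤ G T := hGlb T hT0le
    have hnum : 0 ≤ G T + D + 1 := by linarith
    have hden : 0 < -(V * ε * c) := by linarith
    have htT : T ≤ t := by
      have := div_nonneg hnum hden.le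
      simp only [htdef]; linarith
    have hHle : H t ≤ H T := hanti (Set.self_mem_Ici) htT htT
    have hprod : V * ε * c * (t - T) = -(G T + D + 1) := by
      have : t - T = (G T + D + 1) / (-(V * ε * c)) := by simp [htdef]
      rw [this]
      have hc0 : c ≠ 0 := hc.ne
      field_simp
    have hGt : -D ≤ G t := hGlb t (hT0le.trans htT)
    have : G t - V * ε * c * t ≤ G T - V * ε * c * T := hHle
    nlinarith
  have hlim : ∀ r ∈ J₁, Filter.liminf (fun t => w r t) Filter.atTop = 0 := by
    intro r hr
    have hev0 : ∀ᶠ t in atTop, (0:ℝ) ≤ w r t :=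
      eventually_atTop.mpr ⟨0, fun t ht => hw r hr t ht⟩
    have hset : {a : ℝ | ∀ᶠ t in atTop, a ≤ w r t} = Set.Iic 0 := by
      ext a
      simp only [Set.mem_setOf_eq, Set.mem_Iic]
      constructor
      · intro h
        by_contra hlt
        push_neg at hlt
        exact key r hr a hlt h
      · intro ha
        exact hev0.mono fun t ht => ha.trans ht
    rw [liminf_eq, hset, csSup_Iic]
  refine ⟨hlim, ?_⟩
  intro r hr L hL
  have hL0 : L = 0 := by rw [← hL.liminf_eq, hlim r hr]
  rwa [hL0] at hL
end
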